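/- If (T,p) is a prime parking function on a rooted tree T with n ≥ 1 vertices, then the n-th (final) driver parks at the root of T. -/

import Mathlib

/-! Rooted trees on vertex set `Fin n`, edges oriented towards the root: encoded by
the root and the parent function (`parent v` is the endpoint of the unique outgoing
edge of a non-root vertex `v`; the root is a fixed point). Tree-ness is the condition
that every vertex reaches the root by iterating `parent` (fewer than `n` steps
always suffice). -/

/-- `(root, parent)` encodes a rooted tree on `Fin n` with edges oriented toward the
root. -/
def IsRootedTree {n : ℕ} (root : Fin n) (parent : Fin n → Fin n) : Prop :=
  parent root = root ∧ ∀ v, ∃ k ∈ Finset.range n, parent^[k] v = root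

/-- `T_v`: the set of vertices `u` with a directed path from `u` to `v`
(including `v` itself). -/
def subtree {n : ℕ} (parent : Fin n → Fin n) (v : Fin n) : Finset (Fin n) :=
  Finset.univ.filter fun u => ∃ k ∈ Finset.range n, parent^[k] u = v

/-- The directed path from `v` towards the root: `v, parent v, parent² v, …`. -/
def pathToRoot {n : ℕ} (parent : Fin n → Fin n) (v : Fin n) : List (Fin n) :=
  (List.range n).map fun k => parent^[k] v

/-- The spot where a driver preferring `v` parks, given the set `occ` of occupied
vertices: the first unoccupied vertex on the path from `v` to the root (`none` if
there is no such vertex, i.e. the driver leaves without parking). -/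
def parkSpot {n : ℕ} (parent : Fin n → Fin n) (occ : Finset (Fin n)) (v : Fin n) :
    Option (Fin n) :=
  (pathToRoot parent v).find? fun u => decide (u ∉ occ)

/-- The effect of one driver (preferring `v`) parking on the occupied set. -/
def treeStep {n : ℕ} (parent : Fin n → Fin n) (occ : Finset (Fin n)) (v : Fin n) :
    Finset (Fin n) :=
  match parkSpot parent occ v with
  | some u => insert u occ
  | none => occ

/-- The set of occupied vertices after the first `m` drivers (with preference
sequence `s`) have attempted to park, in order. -/
def occAfter {n : ℕ} (parent : Fin n → Fin n) (s : Fin n → Fin n) (m : ℕ) :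
    Finset (Fin n) :=
  ((List.ofFn s).take m).foldl (treeStep parent) ∅

/-- `s` is a parking function on the rooted tree `(root, parent)`: all `n` drivers
successfully park. -/
def IsTreePF {n : ℕ} (parent : Fin n → Fin n) (s : Fin n → Fin n) : Prop :=
  occAfter parent s n = Finset.univ

/-- `s` is a prime parking function on `(root, parent)`: it is a parking function and
for every non-root vertex `v`, `|T_v| < |{i : s_i ∈ T_v}|`. -/
def IsPrimeTreePF {n : ℕ} (root : Fin n) (parent : Fin n → Fin n)
    (s : Fin n → Fin n) : Prop :=
  IsTreePF parent s ∧ ∀ v, v ≠ root →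
    (subtree parent v).card < (Finset.univ.filter fun i => s i ∈ subtree parent v).card

/-- The edge `(u, parent u)` (for non-root `u`) is *used* by `s`: some driver `i`,
after failing to park at her preferred spot `s i`, crosses it, i.e. every vertex on
the path from `s i` up to and including `u` is occupied when she drives. -/
def UsedEdge {n : ℕ} (root : Fin n) (parent : Fin n → Fin n) (s : Fin n → Fin n)
    (u : Fin n) : Prop :=
  u ≠ root ∧ ∃ i : Fin n, ∃ k, parent^[k] (s i) = u ∧
    ∀ j ≤ k, parent^[j] (s i) ∈ occAfter parent s i

section MyHelpers
variable {n : ℕ}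

lemma my_take_ofFn_succ (s : Fin n → Fin n) {m : ℕ} (hm : m < n) :
    ((List.ofFn s).take (m+1)) = ((List.ofFn s).take m) ++ [s ⟨m, hm⟩] := by
  rw [List.take_succ]
  congr 1
  have : (List.ofFn s)[m]? = some (s ⟨m, hm⟩) := by
    rw [List.getElem?_eq_getElem (by simpa using hm)]; simp
  rw [this]; rfl

lemma my_occAfter_succ (parent s : Fin n → Fin n) {m : ℕ} (hm : m < n) :
    occAfter parent s (m + 1) = treeStep parent (occAfter parent s m) (s ⟨m, hm⟩) := by
  unfold occAfter
  rw [my_take_ofFn_succ s hm, List.foldl_append]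
  rfl

lemma my_occAfter_stab (parent s : Fin n → Fin n) {m : ℕ} (hm : n ≤ m) :
    occAfter parent s (m + 1) = occAfter parent s m := by
  unfold occAfter
  rw [List.take_of_length_le (by simp; omega),
      List.take_of_length_le (by simp; omega)]

lemma my_subset_treeStep (parent : Fin n → Fin n) (occ : Finset (Fin n)) (v : Fin n) :
    occ ⊆ treeStep parent occ v := by
  unfold treeStep
  split
  · exact Finset.subset_insert _ _
  · exact Finset.Subset.refl _

lemma my_card_treeStep_le (parent : Fin n → Fin n) (occ : Finset (Fin n)) (v : Fin n) :
    (treeStep parent occ v).card ≤ occ.card + 1 := by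
  unfold treeStep
  split
  · exact Finset.card_insert_le _ _
  · exact Nat.le_succ _

lemma my_subset_foldl (parent : Fin n → Fin n) :
    ∀ (l : List (Fin n)) (occ : Finset (Fin n)), occ ⊆ l.foldl (treeStep parent) occ := by
  intro l
  induction l with
  | nil => intro occ; exact Finset.Subset.refl _
  | cons a t ih =>
    intro occ
    exact (my_subset_treeStep parent occ a).trans (ih _)

lemma my_occAfter_mono (parent s : Fin n → Fin n) {m m' : ℕ} (h : m ≤ m') :
    occAfter parent s m ⊆ occAfter parent s m' := by
  unfold occAfter
  conv_rhs => rw [← List.take_append_drop m ((List.ofFn s).take m')]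
  rw [List.foldl_append, List.take_take, min_eq_left h]
  exact my_subset_foldl parent _ _

lemma my_card_occAfter_le (parent s : Fin n → Fin n) : ∀ m, (occAfter parent s m).card ≤ m := by
  intro m
  induction m with
  | zero => simp [occAfter]
  | succ m ih =>
    by_cases hm : m < n
    · rw [my_occAfter_succ parent s hm]
      exact (my_card_treeStep_le parent _ _).trans (by omega)
    · rw [my_occAfter_stab parent s (by omega)]; omega

lemma my_card_occAfter_add (parent s : Fin n → Fin n) (m : ℕ) :
    ∀ j, (occAfter parent s (m + j)).card ≤ (occAfter parent s m).card + j := by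
  intro j
  induction j with
  | zero => simp
  | succ j ih =>
    have : m + (j + 1) = (m + j) + 1 := by omega
    rw [this]
    by_cases hm : m + j < n
    · rw [my_occAfter_succ parent s hm]
      exact (my_card_treeStep_le parent _ _).trans (by omega)
    · rw [my_occAfter_stab parent s (by omega)]; omega

lemma my_find?_mem_take {α : Type*} (q : α → Bool) (l : List α) :
    ∀ (m : ℕ) (hm : m < l.length), q (l.get ⟨m, hm⟩) = true → ∀ x, l.find? q = some x →
    x ∈ l.take (m+1) := by
  induction l with
  | nil => intro m hm; simp at hm
  | cons a t ih =>
    intro m hm hq x hf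
    by_cases ha : q a
    · rw [List.find?_cons_of_pos ha] at hf
      cases hf; simp
    · rw [List.find?_cons_of_neg ha] at hf
      match m with
      | 0 => simp at hq; simp [ha] at hq
      | m+1 =>
        have := ih m (by simpa using hm) (by simpa using hq) x hf
        simp [List.take_succ_cons]
        right; exact this

lemma my_parkSpot_not_mem {parent : Fin n → Fin n} {occ : Finset (Fin n)} {v u : Fin n}
    (h : parkSpot parent occ v = some u) : u ∉ occ := by
  have := List.find?_some h
  simpa using this

lemma my_parkSpot_reach {parent : Fin n → Fin n} {occ : Finset (Fin n)} {v u w : Fin n}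
    (h : parkSpot parent occ v = some u) {k : ℕ} (hk : k < n)
    (hw : parent^[k] v = w) (hocc : w ∉ occ) : ∃ j ≤ k, parent^[j] v = u := by
  have hlen : k < (pathToRoot parent v).length := by simp [pathToRoot]; omega
  have hget : (pathToRoot parent v).get ⟨k, hlen⟩ = w := by
    simp [pathToRoot, hw]
  have hq : (fun u => decide (u ∉ occ)) ((pathToRoot parent v).get ⟨k, hlen⟩) = true := by
    rw [hget]; simpa using hocc
  have hx := my_find?_mem_take _ _ k hlen hq u h
  unfold pathToRoot at hx
  rw [← List.map_take, List.take_range, min_eq_left (by omega)] at hx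
  simp only [List.mem_map, List.mem_range] at hx
  obtain ⟨j, hj, hju⟩ := hx
  exact ⟨j, by omega, hju⟩

lemma my_reach_short {root : Fin n} {parent : Fin n → Fin n} (hT : IsRootedTree root parent)
    {u v : Fin n} {m : ℕ} (h : parent^[m] u = v) : ∃ k < n, parent^[k] u = v := by
  obtain ⟨k0, hk0, hr⟩ := hT.2 u
  rw [Finset.mem_range] at hk0
  by_cases hm : m < n
  · exact ⟨m, hm, h⟩
  · have hsplit : m = (m - k0) + k0 := by omega
    have : parent^[m] u = root := by
      rw [hsplit, Function.iterate_add_apply, hr, Function.iterate_fixed hT.1]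
    exact ⟨k0, hk0, by rw [hr, ← h, this]⟩

lemma my_mem_subtree {parent : Fin n → Fin n} {u v : Fin n} :
    u ∈ subtree parent v ↔ ∃ k < n, parent^[k] u = v := by
  simp [subtree, Finset.mem_filter, Finset.mem_range]

end MyHelpers

/-- If `(T, p)` is a prime parking function on a rooted tree with
`n + 1 ≥ 1` vertices, then the final driver parks at the root. -/
theorem final_driver_parks_at_root {n : ℕ} (root : Fin (n + 1))
    (parent : Fin (n + 1) → Fin (n + 1)) (hT : IsRootedTree root parent)
    (p : Fin (n + 1) → Fin (n + 1)) (hp : IsPrimeTreePF root parent p) :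
    parkSpot parent (occAfter parent p n) (p (Fin.last n)) = some root := by
  classical
  obtain ⟨hPF, hprime⟩ := hp
  have hPF' : occAfter parent p (n + 1) = Finset.univ := hPF
  -- cardinality of occupied set after m drivers is exactly m
  have hocc : ∀ m ≤ n + 1, (occAfter parent p m).card = m := by
    intro m hm
    have h1 : (occAfter parent p m).card ≤ m := my_card_occAfter_le parent p m
    have h2 := my_card_occAfter_add parent p m (n + 1 - m)
    have h3 : m + (n + 1 - m) = n + 1 := by omega
    rw [h3, hPF'] at h2
    simp [Finset.card_univ] at h2
    omega
  -- every driver finds a spot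
  have hstep : ∀ i : Fin (n + 1), ∃ u, parkSpot parent (occAfter parent p i.val) (p i) = some u := by
    intro i
    have hi : i.val < n + 1 := i.isLt
    have e : occAfter parent p (i.val + 1) = treeStep parent (occAfter parent p i.val) (p i) := by
      have := my_occAfter_succ parent p hi
      simpa using this
    have c1 := hocc i.val (by omega)
    have c2 := hocc (i.val + 1) (by omega)
    rw [e] at c2
    rcases h : parkSpot parent (occAfter parent p i.val) (p i) with _ | u
    · exfalso
      unfold treeStep at c2
      rw [h] at c2
      simp at c2
      omega
    · exact ⟨u, rfl⟩
  set g : Fin (n + 1) → Fin (n + 1) := fun i => Classical.choose (hstep i) with hgdef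
  have hg : ∀ i, parkSpot parent (occAfter parent p i.val) (p i) = some (g i) :=
    fun i => Classical.choose_spec (hstep i)
  have hnotmem : ∀ i, g i ∉ occAfter parent p i.val := fun i => my_parkSpot_not_mem (hg i)
  have hins : ∀ i : Fin (n + 1), occAfter parent p (i.val + 1)
      = insert (g i) (occAfter parent p i.val) := by
    intro i
    have e : occAfter parent p (i.val + 1) = treeStep parent (occAfter parent p i.val) (p i) := by
      have := my_occAfter_succ parent p i.isLt
      simpa using this
    rw [e]
    unfold treeStep
    rw [hg i]
  have hmemAfter : ∀ (i : Fin (n + 1)) (m : ℕ), i.val + 1 ≤ m → g i ∈ occAfter parent p m := by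
    intro i m hm
    apply my_occAfter_mono parent p hm
    rw [hins i]
    exact Finset.mem_insert_self _ _
  -- the final spot
  have hlastval : (Fin.last n).val = n := rfl
  have hglast : parkSpot parent (occAfter parent p n) (p (Fin.last n)) = some (g (Fin.last n)) := by
    have := hg (Fin.last n); rwa [hlastval] at this
  set w := g (Fin.last n) with hwdef
  suffices hwroot : w = root by rw [hglast, hwroot]
  by_contra hwne
  -- prime condition at w
  set S := subtree parent w with hSdef
  have hwS : w ∈ S := my_mem_subtree.2 ⟨0, by omega, rfl⟩
  have hwnotocc : w ∉ occAfter parent p n := by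
    have := hnotmem (Fin.last n); rwa [hlastval] at this
  set A := Finset.univ.filter (fun i => p i ∈ S) with hAdef
  have hprimeW : S.card < A.card := hprime w hwne
  -- every non-final driver preferring inside S parks inside S, away from w
  have hkey : ∀ i : Fin (n + 1), i ≠ Fin.last n → p i ∈ S → g i ∈ S.erase w := by
    intro i hine hpi
    have hival : i.val < n := by
      rcases Fin.lt_or_eq_of_le (Fin.le_last i) with h | h
      · exact h
      · exact absurd h hine
    obtain ⟨k, hk, hkw⟩ := my_mem_subtree.1 hpi
    have hwnot : w ∉ occAfter parent p i.val := fun hmem =>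
      hwnotocc (my_occAfter_mono parent p (by omega) hmem)
    obtain ⟨j, hj, hju⟩ := my_parkSpot_reach (hg i) hk hkw hwnot
    have hreach : parent^[k - j] (g i) = w := by
      rw [← hju, ← Function.iterate_add_apply]
      have : k - j + j = k := by omega
      rw [this, hkw]
    have hgiS : g i ∈ S := my_mem_subtree.2 ⟨k - j, by omega, hreach⟩
    have hginotw : g i ≠ w := by
      intro he
      apply hwnotocc
      rw [← he]
      exact hmemAfter i n (by omega)
    exact Finset.mem_erase.2 ⟨hginotw, hgiS⟩
  -- injectivity of parking spots
  have hinj : ∀ i j : Fin (n + 1), i.val < j.val → g i ≠ g j := by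
    intro i j hij he
    apply hnotmem j
    rw [← he]
    exact hmemAfter i j.val (by omega)
  set A' := A.erase (Fin.last n) with hA'def
  have hcard1 : A'.card ≤ (S.erase w).card := by
    apply Finset.card_le_card_of_injOn g
    · intro i hi
      have hi' := Finset.mem_erase.1 hi
      exact hkey i hi'.1 ((Finset.mem_filter.1 hi'.2).2)
    · intro i _ j _ he
      rcases lt_trichotomy i.val j.val with h | h | h
      · exact absurd he (hinj i j h)
      · exact Fin.ext h
      · exact absurd he.symm (hinj j i h)
  have hcard2 : A.card ≤ A'.card + 1 := by
    have hsub : A ⊆ insert (Fin.last n) A' := by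
      intro x hx
      by_cases hx' : x = Fin.last n
      · rw [hx']; exact Finset.mem_insert_self _ _
      · exact Finset.mem_insert_of_mem (Finset.mem_erase.2 ⟨hx', hx⟩)
    exact (Finset.card_le_card hsub).trans (Finset.card_insert_le _ _)
  have hcard3 : (S.erase w).card = S.card - 1 := Finset.card_erase_of_mem hwS
  have hS1 : 1 ≤ S.card := Finset.card_pos.2 ⟨w, hwS⟩
  omega
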